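/- For every x ∈ L, exactly one of the following two alternatives holds: x ≥ 0, or x ≤ c + ω. (Almost linearity of the order on L(p).) -/

import Mathlib

open scoped BigOperators

/-- The rank-one abelian group `L(p)`: the quotient of the free abelian group `ℤ^t`
on generators `e 0, …, e (t-1)` by the subgroup generated by the elements
`p i • e i - p 0 • e 0`. -/
abbrev LGrp (t : ℕ) (ht : 0 < t) (p : Fin t → ℕ) : Type :=
  (Fin t → ℤ) ⧸ AddSubgroup.closure
    (Set.range fun i : Fin t =>
      (p i : ℤ) • Pi.single i (1 : ℤ) - (p ⟨0, ht⟩ : ℤ) • Pi.single ⟨0, ht⟩ (1 : ℤ))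

/-- The image `x i` of the generator `e i` in `L(p)`. -/
def xgen (t : ℕ) (ht : 0 < t) (p : Fin t → ℕ) (i : Fin t) : LGrp t ht p :=
  QuotientAddGroup.mk (Pi.single i 1)

/-- The canonical element `c = p 0 • x 0` of `L(p)`. -/
def cElem (t : ℕ) (ht : 0 < t) (p : Fin t → ℕ) : LGrp t ht p :=
  (p ⟨0, ht⟩ : ℤ) • xgen t ht p ⟨0, ht⟩

/-- The dualizing element `ω = (t - 2) • c - (x 0 + ⋯ + x (t-1))` of `L(p)`. -/
def omegaElem (t : ℕ) (ht : 0 < t) (p : Fin t → ℕ) : LGrp t ht p :=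
  ((t : ℤ) - 2) • cElem t ht p - ∑ i, xgen t ht p i

/-- The positive cone `L₊ = {a 0 • x 0 + ⋯ + a (t-1) • x (t-1) : a i ∈ ℕ}`;
`x ≤ y` means `y - x ∈ L₊`. -/
def posCone (t : ℕ) (ht : 0 < t) (p : Fin t → ℕ) : Set (LGrp t ht p) :=
  { y | ∃ a : Fin t → ℕ, y = ∑ i, (a i : ℤ) • xgen t ht p i }

namespace AlmostLinearAux

/-- The degree function: `F a = ∑ ⌊a i / p i⌋`. -/
def Fdeg {t : ℕ} (pp : Fin t → ℕ) (a : Fin t → ℤ) : ℤ := ∑ i, a i / (pp i : ℤ)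

lemma ediv_add_self (a : ℤ) {q : ℤ} (hq : 0 < q) : (a + q) / q = a / q + 1 := by
  simpa using Int.add_mul_ediv_right a 1 hq.ne'

lemma ediv_sub_self (a : ℤ) {q : ℤ} (hq : 0 < q) : (a - q) / q = a / q - 1 := by
  have h := ediv_add_self (a - q) hq
  rw [sub_add_cancel] at h
  linarith

lemma ediv_neg_one_sub (a : ℤ) {q : ℤ} (hq : 0 < q) : (-1 - a) / q = -1 - a / q := by
  have hmod₁ := Int.emod_nonneg a hq.ne'
  have hmod₂ := Int.emod_lt_of_pos a hq
  have hd := Int.mul_ediv_add_emod a q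
  have h : -1 - a = (q - 1 - a % q) + (-1 - a / q) * q := by linear_combination hd
  rw [h, Int.add_mul_ediv_right _ _ hq.ne',
    Int.ediv_eq_zero_of_lt (by omega) (by omega)]
  ring

section Main

variable {t : ℕ} (ht : 0 < t) (pp : Fin t → ℕ) (hp : ∀ i, 2 ≤ pp i)

include hp in
lemma ppos (i : Fin t) : (0 : ℤ) < (pp i : ℤ) := by
  have := hp i; omega

include hp in
/-- `Fdeg` is invariant under adding an element of the relation subgroup. -/
lemma Fdeg_add_mem {g : Fin t → ℤ}
    (hg : g ∈ AddSubgroup.closure (Set.range fun i : Fin t =>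
      (pp i : ℤ) • Pi.single i (1 : ℤ) - (pp ⟨0, ht⟩ : ℤ) • Pi.single ⟨0, ht⟩ (1 : ℤ))) :
    ∀ a : Fin t → ℤ, Fdeg pp (a + g) = Fdeg pp a := by
  refine AddSubgroup.closure_induction
    (p := fun g _ => ∀ a : Fin t → ℤ, Fdeg pp (a + g) = Fdeg pp a) ?_ ?_ ?_ ?_ hg
  · rintro x ⟨i, rfl⟩ a
    set i0 : Fin t := ⟨0, ht⟩ with hi0
    set w : Fin t → ℤ :=
      (pp i : ℤ) • Pi.single i (1 : ℤ) - (pp i0 : ℤ) • Pi.single i0 (1 : ℤ) with hw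
    have key : ∀ j, (a j + w j) / (pp j : ℤ)
        = a j / (pp j : ℤ) + ((Pi.single i (1 : ℤ) : Fin t → ℤ) j
          - (Pi.single i0 (1 : ℤ) : Fin t → ℤ) j) := by
      intro j
      have hpj := ppos pp hp j
      have hwj : w j = (if j = i then (pp i : ℤ) else 0)
          - (if j = i0 then (pp i0 : ℤ) else 0) := by
        simp [hw, Pi.single_apply, mul_ite]
      rw [hwj, Pi.single_apply, Pi.single_apply]
      split_ifs with h1 h2 h2
      · rw [← h1, ← h2]; simp
      · rw [← h1, show a j + ((pp j : ℤ) - 0) = a j + (pp j : ℤ) by ring,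
          ediv_add_self _ hpj]; ring
      · rw [← h2, show a j + (0 - (pp j : ℤ)) = a j - (pp j : ℤ) by ring,
          ediv_sub_self _ hpj]; ring
      · simp
    unfold Fdeg
    calc ∑ j, (a + w) j / (pp j : ℤ)
        = ∑ j, (a j / (pp j : ℤ) + ((Pi.single i (1 : ℤ) : Fin t → ℤ) j
            - (Pi.single i0 (1 : ℤ) : Fin t → ℤ) j)) := by
          refine Finset.sum_congr rfl fun j _ => ?_
          rw [Pi.add_apply]; exact key j
      _ = ∑ j, a j / (pp j : ℤ) := by
          rw [Finset.sum_add_distrib, Finset.sum_sub_distrib]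
          simp [Pi.single_apply]
  · intro a; simp [Fdeg]
  · intro g h _ _ ihg ihh a
    rw [show a + (g + h) = (a + g) + h by ring, ihh, ihg]
  · intro g _ ihg a
    have := ihg (a + -g)
    rw [show a + -g + g = a by ring] at this
    rw [this]

include hp in
/-- Representatives of the same class have equal `Fdeg`. -/
lemma Fdeg_congr {a b : Fin t → ℤ}
    (h : (QuotientAddGroup.mk a : LGrp t ht pp) = QuotientAddGroup.mk b) :
    Fdeg pp a = Fdeg pp b := by
  have hmem := (QuotientAddGroup.eq).mp h
  have h2 := Fdeg_add_mem ht pp hp hmem a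
  rw [show a + (-a + b) = b by ring] at h2
  exact h2.symm

lemma sum_smul_xgen (c : Fin t → ℤ) :
    ∑ i, c i • xgen t ht pp i = (QuotientAddGroup.mk c : LGrp t ht pp) := by
  set N := AddSubgroup.closure (Set.range fun i : Fin t =>
      ((pp i : ℤ) • Pi.single i (1 : ℤ)
        - (pp ⟨0, ht⟩ : ℤ) • Pi.single (⟨0, ht⟩ : Fin t) (1 : ℤ) : Fin t → ℤ))
  have h1 : ∀ i, c i • xgen t ht pp i
      = QuotientAddGroup.mk' N (c i • Pi.single i (1 : ℤ)) := by
    intro i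
    rw [map_zsmul]
    rfl
  rw [Finset.sum_congr rfl fun i _ => h1 i, ← map_sum]
  have hsum : (∑ i, c i • Pi.single i (1 : ℤ)) = c := by
    have h2 : ∀ i : Fin t, (c i • Pi.single i (1 : ℤ) : Fin t → ℤ) = Pi.single i (c i) := by
      intro i
      ext j
      simp [Pi.single_apply]
    rw [Finset.sum_congr rfl fun i _ => h2 i, Finset.univ_sum_single]
  rw [hsum]
  rfl

include hp in
/-- Membership in the positive cone is equivalent to nonnegativity of `Fdeg`. -/
lemma mem_posCone_iff (a : Fin t → ℤ) :
    (QuotientAddGroup.mk a : LGrp t ht pp) ∈ posCone t ht pp ↔ 0 ≤ Fdeg pp a := by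
  constructor
  · rintro ⟨c, hc⟩
    rw [sum_smul_xgen ht pp] at hc
    rw [Fdeg_congr ht pp hp hc]
    exact Finset.sum_nonneg fun i _ =>
      Int.ediv_nonneg (by simp) (le_of_lt (ppos pp hp i))
  · intro h
    set i0 : Fin t := ⟨0, ht⟩ with hi0
    set b : Fin t → ℤ := fun j =>
      if j = i0 then a j % (pp j : ℤ) + (pp j : ℤ) * Fdeg pp a else a j % (pp j : ℤ) with hb
    have hb0 : ∀ j, 0 ≤ b j := by
      intro j
      have h1 := Int.emod_nonneg (a j) (ppos pp hp j).ne'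
      have h2 : 0 ≤ (pp j : ℤ) * Fdeg pp a :=
        mul_nonneg (le_of_lt (ppos pp hp j)) h
      have hbj : b j = if j = i0 then a j % (pp j : ℤ) + (pp j : ℤ) * Fdeg pp a
          else a j % (pp j : ℤ) := rfl
      rw [hbj]
      split_ifs <;> omega
    refine ⟨fun j => (b j).toNat, ?_⟩
    rw [sum_smul_xgen ht pp]
    have hbt : (fun j => ((b j).toNat : ℤ)) = b := funext fun j => Int.toNat_of_nonneg (hb0 j)
    rw [hbt]
    refine (QuotientAddGroup.eq).mpr ?_
    have hrep : -a + b = ∑ i, (-(a i / (pp i : ℤ))) •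
        ((pp i : ℤ) • Pi.single i (1 : ℤ)
          - (pp i0 : ℤ) • Pi.single i0 (1 : ℤ) : Fin t → ℤ) := by
      funext j
      rw [Finset.sum_apply]
      have hterm : ∀ i : Fin t, ((-(a i / (pp i : ℤ))) •
          ((pp i : ℤ) • Pi.single i (1 : ℤ)
            - (pp i0 : ℤ) • Pi.single i0 (1 : ℤ)) : Fin t → ℤ) j
          = (if j = i then -(a i / (pp i : ℤ)) * (pp i : ℤ) else 0)
            - (-(a i / (pp i : ℤ))) * ((pp i0 : ℤ) * (if j = i0 then 1 else 0)) := by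
        intro i
        simp only [Pi.smul_apply, Pi.sub_apply, smul_eq_mul, Pi.single_apply]
        split_ifs <;> ring
      rw [Finset.sum_congr rfl fun i _ => hterm i, Finset.sum_sub_distrib]
      rw [Finset.sum_ite_eq Finset.univ j (fun i => -(a i / (pp i : ℤ)) * (pp i : ℤ))]
      rw [← Finset.sum_mul]
      have hF : (∑ i, -(a i / (pp i : ℤ))) = -Fdeg pp a := by
        simp [Fdeg]
      rw [hF]
      have hd := Int.mul_ediv_add_emod (a j) (pp j : ℤ)
      by_cases hj : j = i0
      · rw [hj] at hd
        simp only [Pi.add_apply, Pi.neg_apply, hb, hj, if_pos rfl, Finset.mem_univ, if_true]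
        linear_combination hd
      · simp only [Pi.add_apply, Pi.neg_apply, hb, if_neg hj, Finset.mem_univ, if_true,
          mul_zero, mul_one, sub_zero]
        linear_combination hd
    rw [hrep]
    exact sum_mem fun i _ =>
      AddSubgroup.zsmul_mem _ (AddSubgroup.subset_closure (Set.mem_range_self i)) _

/-- A representative for `c + ω - x`. -/
lemma target_rep (a : Fin t → ℤ) :
    cElem t ht pp + omegaElem t ht pp - QuotientAddGroup.mk a
      = (QuotientAddGroup.mk
          (((((t : ℤ) - 1) * (pp ⟨0, ht⟩ : ℤ)) • Pi.single (⟨0, ht⟩ : Fin t) (1 : ℤ)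
            - (fun _ => 1) - a : Fin t → ℤ)) : LGrp t ht pp) := by
  set i0 : Fin t := ⟨0, ht⟩ with hi0
  set N := AddSubgroup.closure (Set.range fun i : Fin t =>
      ((pp i : ℤ) • Pi.single i (1 : ℤ)
        - (pp i0 : ℤ) • Pi.single i0 (1 : ℤ) : Fin t → ℤ))
  have hπ : ∀ (n : ℤ) (v : Fin t → ℤ),
      n • (QuotientAddGroup.mk' N v) = QuotientAddGroup.mk' N (n • v) :=
    fun n v => (map_zsmul (QuotientAddGroup.mk' N) n v).symm
  have h1 : cElem t ht pp = QuotientAddGroup.mk' N ((pp i0 : ℤ) • Pi.single i0 (1 : ℤ)) := by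
    rw [show cElem t ht pp = (pp i0 : ℤ) • xgen t ht pp i0 from rfl,
      show xgen t ht pp i0 = QuotientAddGroup.mk' N (Pi.single i0 (1 : ℤ)) from rfl, hπ]
  have hsum : (∑ i, xgen t ht pp i) = QuotientAddGroup.mk' N (fun _ => (1 : ℤ)) := by
    have h := sum_smul_xgen ht pp (fun _ => (1 : ℤ))
    simp only [one_smul] at h
    rw [h]; rfl
  have h2 : omegaElem t ht pp = QuotientAddGroup.mk' N
      ((((t : ℤ) - 2) • ((pp i0 : ℤ) • Pi.single i0 (1 : ℤ)) - fun _ => (1 : ℤ))) := by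
    rw [show omegaElem t ht pp
        = ((t : ℤ) - 2) • cElem t ht pp - ∑ i, xgen t ht pp i from rfl,
      h1, hπ, hsum, ← map_sub]
  rw [h1, h2, show (QuotientAddGroup.mk a : LGrp t ht pp) = QuotientAddGroup.mk' N a from rfl,
    ← map_add, ← map_sub]
  show _ = QuotientAddGroup.mk' N _
  congr 1
  funext j
  simp only [Pi.add_apply, Pi.sub_apply, Pi.smul_apply, smul_eq_mul, Pi.single_apply]
  by_cases hj : j = i0 <;> simp [hj, ← hi0] <;> ring

include hp in
lemma Fdeg_target (a : Fin t → ℤ) :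
    Fdeg pp ((((t : ℤ) - 1) * (pp ⟨0, ht⟩ : ℤ)) • Pi.single (⟨0, ht⟩ : Fin t) (1 : ℤ)
        - (fun _ => 1) - a)
      = -1 - Fdeg pp a := by
  set i0 : Fin t := ⟨0, ht⟩ with hi0
  set w : Fin t → ℤ :=
    (((t : ℤ) - 1) * (pp i0 : ℤ)) • Pi.single i0 (1 : ℤ) - (fun _ => 1) - a with hw
  have key : ∀ j, w j / (pp j : ℤ)
      = (-1 - a j / (pp j : ℤ)) + ((t : ℤ) - 1) * (if j = i0 then 1 else 0) := by
    intro j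
    have hpj := ppos pp hp j
    have hwj : w j = (if j = i0 then ((t : ℤ) - 1) * (pp j : ℤ) else 0) - 1 - a j := by
      by_cases hj : j = i0
      · subst hj; simp [hw, Pi.single_apply]
      · simp [hw, Pi.single_apply, hj]
    rw [hwj]
    split_ifs with hj
    · rw [show ((t : ℤ) - 1) * (pp j : ℤ) - 1 - a j
          = (-1 - a j) + ((t : ℤ) - 1) * (pp j : ℤ) by ring,
        Int.add_mul_ediv_right _ _ hpj.ne', ediv_neg_one_sub _ hpj]
      ring
    · rw [show (0 : ℤ) - 1 - a j = -1 - a j by ring, ediv_neg_one_sub _ hpj]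
      ring
  unfold Fdeg
  rw [show (∑ j, w j / (pp j : ℤ))
      = ∑ j, ((-1 - a j / (pp j : ℤ)) + ((t : ℤ) - 1) * (if j = i0 then 1 else 0)) from
    Finset.sum_congr rfl fun j _ => key j]
  rw [Finset.sum_add_distrib, Finset.sum_sub_distrib, ← Finset.mul_sum]
  simp only [Finset.sum_ite_eq', Finset.mem_univ, if_true, Finset.sum_const,
    Finset.card_univ, Fintype.card_fin, nsmul_eq_mul, mul_one]
  ring

end Main

end AlmostLinearAux

/-- almost linearity of the order on `L(p)`: for every `x ∈ L`,
exactly one of `x ≥ 0` and `x ≤ c + ω` holds. -/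
theorem almost_linear_order
    (t : ℕ) (ht : 0 < t) (p : Fin t → ℕ) (hp : ∀ i, 2 ≤ p i)
    (x : LGrp t ht p) :
    Xor' (x ∈ posCone t ht p)
      (cElem t ht p + omegaElem t ht p - x ∈ posCone t ht p) := by
  obtain ⟨a, rfl⟩ := QuotientAddGroup.mk_surjective x
  rw [AlmostLinearAux.target_rep ht p a,
    AlmostLinearAux.mem_posCone_iff ht p hp a,
    AlmostLinearAux.mem_posCone_iff ht p hp _,
    AlmostLinearAux.Fdeg_target ht p hp a]
  unfold Xor' Xor
  omega
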